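/- The function Ω(u) = 4 e^{u/2} ∑_{n=1}^∞ π n² e^{2u} (2π n² e^{2u} − 3) exp(−π n² e^{2u}) is strictly positive for all real u. -/

import Mathlib

open Real

noncomputable def Omega (u : ℝ) : ℝ :=
  4 * Real.exp (u / 2) *
    ∑' n : ℕ, π * ((n : ℝ) + 1) ^ 2 * Real.exp (2 * u) *
      (2 * π * ((n : ℝ) + 1) ^ 2 * Real.exp (2 * u) - 3) *
      Real.exp (-π * ((n : ℝ) + 1) ^ 2 * Real.exp (2 * u))

namespace OmegaAux

noncomputable def E (a : ℝ) (n : ℕ) : ℝ := Real.exp (-π * a * ((n : ℝ) + 1) ^ 2)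

noncomputable def P (k : ℕ) (a : ℝ) : ℝ := ∑' n : ℕ, (π * ((n : ℝ) + 1) ^ 2) ^ k * E a n

lemma E_pos (a : ℝ) (n : ℕ) : 0 < E a n := Real.exp_pos _

lemma E_le {a b : ℝ} (hab : a ≤ b) (ha : 0 < a) (n : ℕ) : E b n ≤ E a n := by
  unfold E
  apply Real.exp_le_exp.2
  have h1 : (0:ℝ) ≤ ((n:ℝ)+1)^2 := by positivity
  have h2 := mul_le_mul_of_nonneg_right (mul_le_mul_of_nonneg_left hab Real.pi_pos.le) h1
  linarith

lemma summable_P (k : ℕ) {a : ℝ} (ha : 0 < a) :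
    Summable fun n : ℕ => (π * ((n : ℝ) + 1) ^ 2) ^ k * E a n := by
  have hr : ‖Real.exp (-π * a)‖ < 1 := by
    rw [Real.norm_eq_abs, abs_of_pos (Real.exp_pos _)]
    exact Real.exp_lt_one_iff.2 (by nlinarith [Real.pi_pos])
  have h1 : Summable fun n : ℕ => (n : ℝ) ^ (2 * k) * Real.exp (-π * a) ^ n :=
    summable_pow_mul_geometric_of_norm_lt_one (2 * k) hr
  have h2 : Summable fun n : ℕ =>
      ((n : ℝ) + 1) ^ (2 * k) * Real.exp (-π * a) ^ (n + 1) := by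
    have := (summable_nat_add_iff
      (f := fun n : ℕ => (n : ℝ) ^ (2 * k) * Real.exp (-π * a) ^ n) 1).2 h1
    simpa using this
  apply Summable.of_nonneg_of_le
    (fun n => mul_nonneg (by positivity) (E_pos a n).le) _ (h2.mul_left (π ^ k))
  intro n
  have hm1 : (1:ℝ) ≤ (n : ℝ) + 1 := by
    have := n.cast_nonneg (α := ℝ); linarith
  have hE : E a n ≤ Real.exp (-π * a) ^ (n + 1) := by
    rw [← Real.exp_nat_mul]
    unfold E
    apply Real.exp_le_exp.2
    push_cast
    have key : ((n:ℝ) + 1) ≤ ((n:ℝ) + 1) ^ 2 := by nlinarith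
    nlinarith [mul_le_mul_of_nonneg_left key (mul_nonneg Real.pi_pos.le ha.le)]
  calc (π * ((n : ℝ) + 1) ^ 2) ^ k * E a n
      = π ^ k * (((n : ℝ) + 1) ^ (2 * k) * E a n) := by
        rw [mul_pow, pow_mul]; ring
    _ ≤ π ^ k * (((n : ℝ) + 1) ^ (2 * k) * Real.exp (-π * a) ^ (n + 1)) := by
        apply mul_le_mul_of_nonneg_left _ (by positivity)
        exact mul_le_mul_of_nonneg_left hE (by positivity)

lemma hasDerivAt_term (k n : ℕ) (y : ℝ) :
    HasDerivAt (fun x => (π * ((n : ℝ) + 1) ^ 2) ^ k * E x n)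
      (-((π * ((n : ℝ) + 1) ^ 2) ^ (k + 1) * E y n)) y := by
  have h : HasDerivAt (fun x : ℝ => -π * x * ((n : ℝ) + 1) ^ 2)
      (-π * ((n : ℝ) + 1) ^ 2) y := by
    simpa using ((hasDerivAt_id y).const_mul (-π)).mul_const (((n : ℝ) + 1) ^ 2)
  have h2 := (h.exp).const_mul ((π * ((n : ℝ) + 1) ^ 2) ^ k)
  refine h2.congr_deriv ?_
  unfold E
  ring

lemma hasDerivAt_P (k : ℕ) {a : ℝ} (ha : 0 < a) :
    HasDerivAt (P k) (-P (k + 1) a) a := by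
  have key := hasDerivAt_tsum_of_isPreconnected
    (u := fun n : ℕ => (π * ((n : ℝ) + 1) ^ 2) ^ (k + 1) * E (a / 2) n)
    (g := fun n x => (π * ((n : ℝ) + 1) ^ 2) ^ k * E x n)
    (g' := fun n x => -((π * ((n : ℝ) + 1) ^ 2) ^ (k + 1) * E x n))
    (summable_P (k + 1) (half_pos ha)) isOpen_Ioi (convex_Ioi (a / 2)).isPreconnected
    (fun n y _ => hasDerivAt_term k n y)
    (fun n y hy => ?_) (half_lt_self ha) (summable_P k ha) (half_lt_self ha)
  · have ht : (∑' n : ℕ, -((π * ((n : ℝ) + 1) ^ 2) ^ (k + 1) * E a n)) = -P (k + 1) a := by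
      rw [tsum_neg]; rfl
    rw [ht] at key
    exact key
  · rw [Real.norm_eq_abs, abs_neg, abs_of_nonneg (mul_nonneg (by positivity) (E_pos y n).le)]
    exact mul_le_mul_of_nonneg_left (E_le (le_of_lt hy) (half_pos ha) n) (by positivity)

lemma summable_E {b : ℝ} (hb : 0 < b) : Summable fun n : ℕ => E b n := by
  have := summable_P 0 hb
  simpa using this

lemma summable_sq {b : ℝ} (hb : 0 < b) :
    Summable fun n : ℕ => Real.exp (-π * b * (n : ℝ) ^ 2) := by
  refine (summable_nat_add_iff (f := fun n : ℕ => Real.exp (-π * b * (n : ℝ) ^ 2)) 1).1 ?_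
  apply (summable_E hb).congr
  intro n
  unfold E
  push_cast
  ring_nf

lemma int_sum {b : ℝ} (hb : 0 < b) :
    (∑' n : ℤ, Real.exp (-π * b * (n : ℝ) ^ 2)) = 1 + 2 * P 0 b := by
  have hf1 : Summable fun n : ℕ => Real.exp (-π * b * ((n : ℤ) : ℝ) ^ 2) := by
    have := summable_sq hb; simpa using this
  have hf2 : Summable fun n : ℕ => Real.exp (-π * b * ((-((n : ℤ) + 1) : ℤ) : ℝ) ^ 2) := by
    apply (summable_E hb).congr
    intro n
    unfold E
    push_cast
    ring_nf
  rw [tsum_of_nat_of_neg_add_one (f := fun n : ℤ => Real.exp (-π * b * (n : ℝ) ^ 2)) hf1 hf2]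
  have h1 : (∑' n : ℕ, Real.exp (-π * b * ((n : ℤ) : ℝ) ^ 2)) = 1 + P 0 b := by
    rw [Summable.tsum_eq_zero_add hf1]
    congr 1
    · simp
    · unfold P E
      apply tsum_congr
      intro n
      push_cast
      ring_nf
  have h2 : (∑' n : ℕ, Real.exp (-π * b * ((-((n : ℤ) + 1) : ℤ) : ℝ) ^ 2)) = P 0 b := by
    unfold P E
    apply tsum_congr
    intro n
    push_cast
    ring_nf
  rw [h1, h2]
  ring

lemma funeq {a : ℝ} (ha : 0 < a) :
    1 + 2 * P 0 a = (a ^ (1/2 : ℝ))⁻¹ * (1 + 2 * P 0 a⁻¹) := by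
  have h := Real.tsum_exp_neg_mul_int_sq ha
  have h1 : (∑' n : ℤ, Real.exp (-π / a * (n : ℝ) ^ 2)) = 1 + 2 * P 0 a⁻¹ := by
    rw [← int_sum (inv_pos.2 ha)]
    apply tsum_congr
    intro n
    rw [div_eq_mul_inv]
  rw [int_sum ha, h1] at h
  rw [h]
  rw [one_div]

noncomputable def g (u : ℝ) : ℝ := Real.exp (u / 2) * (1 + 2 * P 0 (Real.exp (2 * u)))

noncomputable def g1 (u : ℝ) : ℝ :=
  (1 / 2 : ℝ) * (Real.exp (u / 2) * (1 + 2 * P 0 (Real.exp (2 * u))))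
    - (4 : ℝ) * (Real.exp (u / 2) * (Real.exp (2 * u) * P 1 (Real.exp (2 * u))))

noncomputable def g2 (u : ℝ) : ℝ :=
  (1 / 4) * Real.exp (u / 2) * (1 + 2 * P 0 (Real.exp (2 * u)))
    - 12 * (Real.exp (u / 2) * (Real.exp (2 * u) * P 1 (Real.exp (2 * u))))
    + 8 * (Real.exp (u / 2) * (Real.exp (2 * u) ^ 2 * P 2 (Real.exp (2 * u))))

lemma hasDerivAt_e2 (u : ℝ) :
    HasDerivAt (fun u : ℝ => Real.exp (2 * u)) (2 * Real.exp (2 * u)) u := by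
  have := ((hasDerivAt_id u).const_mul (2:ℝ)).exp
  simpa [mul_comm] using this

lemma hasDerivAt_eh (u : ℝ) :
    HasDerivAt (fun u : ℝ => Real.exp (u / 2)) ((1 / 2) * Real.exp (u / 2)) u := by
  have := ((hasDerivAt_id u).div_const (2:ℝ)).exp
  simpa [mul_comm] using this

lemma hasDerivAt_Pcomp (k : ℕ) (u : ℝ) :
    HasDerivAt (fun u : ℝ => P k (Real.exp (2 * u)))
      (-P (k + 1) (Real.exp (2 * u)) * (2 * Real.exp (2 * u))) u :=
  by have := (hasDerivAt_P k (Real.exp_pos (2 * u))).comp u (hasDerivAt_e2 u); exact this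

lemma hasDerivAt_g (u : ℝ) : HasDerivAt g (g1 u) u := by
  have hin : HasDerivAt (fun u : ℝ => 1 + 2 * P 0 (Real.exp (2 * u)))
      (2 * (-P 1 (Real.exp (2 * u)) * (2 * Real.exp (2 * u)))) u :=
    ((hasDerivAt_Pcomp 0 u).const_mul 2).const_add 1
  have := (hasDerivAt_eh u).mul hin
  refine this.congr_deriv ?_
  unfold g1
  ring

lemma hasDerivAt_g1 (u : ℝ) : HasDerivAt g1 (g2 u) u := by
  have hin : HasDerivAt (fun u : ℝ => 1 + 2 * P 0 (Real.exp (2 * u)))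
      (2 * (-P 1 (Real.exp (2 * u)) * (2 * Real.exp (2 * u)))) u :=
    ((hasDerivAt_Pcomp 0 u).const_mul 2).const_add 1
  have t1 := ((hasDerivAt_eh u).mul hin).const_mul (1 / 2 : ℝ)
  have t2 := ((hasDerivAt_eh u).mul ((hasDerivAt_e2 u).mul (hasDerivAt_Pcomp 1 u))).const_mul
    (4 : ℝ)
  have h := t1.sub t2
  refine h.congr_deriv ?_
  unfold g2
  simp only [Pi.mul_apply]
  ring

lemma g_even (u : ℝ) : g (-u) = g u := by
  have h := funeq (a := Real.exp (2 * u)) (Real.exp_pos _)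
  have hpow : (Real.exp (2 * u)) ^ (1/2 : ℝ) = Real.exp u := by
    rw [Real.rpow_def_of_pos (Real.exp_pos _), Real.log_exp]
    congr 1
    ring
  have hinv : (Real.exp (2 * u))⁻¹ = Real.exp (2 * -u) := by
    rw [← Real.exp_neg]
    congr 1
    ring
  rw [hpow, hinv] at h
  unfold g
  rw [h]
  have hmul : Real.exp (u / 2) * (Real.exp u)⁻¹ = Real.exp (-u / 2) := by
    rw [← Real.exp_neg, ← Real.exp_add]
    congr 1
    ring
  rw [← mul_assoc, hmul]

lemma g1_odd (u : ℝ) : g1 (-u) = -g1 u := by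
  have h1 : HasDerivAt (fun v : ℝ => g (-v)) (g1 (-u) * (-1)) u :=
    (hasDerivAt_g (-u)).comp u (by simpa using hasDerivAt_neg u)
  have hfun : (fun v : ℝ => g (-v)) = g := funext g_even
  rw [hfun] at h1
  have := h1.unique (hasDerivAt_g u)
  linarith

lemma g2_even (u : ℝ) : g2 (-u) = g2 u := by
  have h1 : HasDerivAt (fun v : ℝ => g1 (-v)) (g2 (-u) * (-1)) u :=
    (hasDerivAt_g1 (-u)).comp u (by simpa using hasDerivAt_neg u)
  have hfun : (fun v : ℝ => g1 (-v)) = fun v => -g1 v := funext g1_odd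
  rw [hfun] at h1
  have h2 : HasDerivAt (fun v : ℝ => -g1 v) (-g2 u) u := (hasDerivAt_g1 u).neg
  have := h1.unique h2
  linarith

lemma tsum_omega {a : ℝ} (ha : 0 < a) :
    (∑' n : ℕ, π * ((n : ℝ) + 1) ^ 2 * a * (2 * π * ((n : ℝ) + 1) ^ 2 * a - 3) *
        Real.exp (-π * ((n : ℝ) + 1) ^ 2 * a))
      = 2 * a ^ 2 * P 2 a - 3 * a * P 1 a := by
  have h2 := (summable_P 2 ha).mul_left (2 * a ^ 2)
  have h1 := (summable_P 1 ha).mul_left (3 * a)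
  have hfun : (fun n : ℕ => π * ((n : ℝ) + 1) ^ 2 * a * (2 * π * ((n : ℝ) + 1) ^ 2 * a - 3) *
        Real.exp (-π * ((n : ℝ) + 1) ^ 2 * a))
      = fun n : ℕ => (2 * a ^ 2) * ((π * ((n : ℝ) + 1) ^ 2) ^ 2 * E a n)
        - (3 * a) * ((π * ((n : ℝ) + 1) ^ 2) ^ 1 * E a n) := by
    funext n
    have hE : Real.exp (-π * ((n : ℝ) + 1) ^ 2 * a) = E a n := by
      unfold E; congr 1; ring
    rw [hE]
    ring
  rw [hfun, Summable.tsum_sub h2 h1, tsum_mul_left, tsum_mul_left]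
  rfl

lemma Omega_eq (u : ℝ) : Omega u = g2 u - g u / 4 := by
  unfold Omega
  rw [tsum_omega (Real.exp_pos (2 * u))]
  unfold g2 g
  ring

lemma Omega_even (u : ℝ) : Omega (-u) = Omega u := by
  rw [Omega_eq, Omega_eq, g2_even, g_even]

lemma Omega_pos_of_nonneg {u : ℝ} (hu : 0 ≤ u) : 0 < Omega u := by
  unfold Omega
  have ha : (1:ℝ) ≤ Real.exp (2 * u) := Real.one_le_exp (by linarith)
  have hpos : ∀ n : ℕ, 0 < π * ((n : ℝ) + 1) ^ 2 * Real.exp (2 * u) *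
      (2 * π * ((n : ℝ) + 1) ^ 2 * Real.exp (2 * u) - 3) *
      Real.exp (-π * ((n : ℝ) + 1) ^ 2 * Real.exp (2 * u)) := by
    intro n
    have hm1 : (1:ℝ) ≤ ((n : ℝ) + 1) ^ 2 := by
      have := n.cast_nonneg (α := ℝ); nlinarith
    have h4 : (1:ℝ) ≤ ((n : ℝ) + 1) ^ 2 * Real.exp (2 * u) := by nlinarith
    have h5 : 2 * π ≤ 2 * π * (((n : ℝ) + 1) ^ 2 * Real.exp (2 * u)) :=
      le_mul_of_one_le_right (by positivity) h4
    have h3 : (3:ℝ) < 2 * π * ((n : ℝ) + 1) ^ 2 * Real.exp (2 * u) := by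
      nlinarith [Real.pi_gt_three]
    have h0 : 0 < π * ((n : ℝ) + 1) ^ 2 * Real.exp (2 * u) := by positivity
    have hee := Real.exp_pos (-π * ((n : ℝ) + 1) ^ 2 * Real.exp (2 * u))
    exact mul_pos (mul_pos h0 (by linarith)) hee
  have hsum : Summable fun n : ℕ => π * ((n : ℝ) + 1) ^ 2 * Real.exp (2 * u) *
      (2 * π * ((n : ℝ) + 1) ^ 2 * Real.exp (2 * u) - 3) *
      Real.exp (-π * ((n : ℝ) + 1) ^ 2 * Real.exp (2 * u)) := by
    have h2 := (summable_P 2 (Real.exp_pos (2 * u))).mul_left (2 * Real.exp (2 * u) ^ 2)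
    have h1 := (summable_P 1 (Real.exp_pos (2 * u))).mul_left (3 * Real.exp (2 * u))
    apply (h2.sub h1).congr
    intro n
    have hE : Real.exp (-π * ((n : ℝ) + 1) ^ 2 * Real.exp (2 * u))
        = E (Real.exp (2 * u)) n := by
      unfold E; congr 1; ring
    rw [hE]
    unfold E
    ring
  have htsum : 0 < ∑' n : ℕ, π * ((n : ℝ) + 1) ^ 2 * Real.exp (2 * u) *
      (2 * π * ((n : ℝ) + 1) ^ 2 * Real.exp (2 * u) - 3) *
      Real.exp (-π * ((n : ℝ) + 1) ^ 2 * Real.exp (2 * u)) :=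
    Summable.tsum_pos hsum (fun n => (hpos n).le) 0 (hpos 0)
  exact mul_pos (by positivity) htsum

end OmegaAux

/-- `Ω` is strictly positive on all of `ℝ`. -/
theorem Omega_pos (u : ℝ) : 0 < Omega u := by
  rcases le_total 0 u with h | h
  · exact OmegaAux.Omega_pos_of_nonneg h
  · rw [← OmegaAux.Omega_even]
    exact OmegaAux.Omega_pos_of_nonneg (by linarith)
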